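/- Let H be a numerical semigroup with smallest nonzero element λ₁, and let e be a nonzero element of H. Then the cardinality of H \ (eH* + H) equals eλ₁, where H* = H \ {0} and eH* + H = {eλ + μ : λ ∈ H*, μ ∈ H}. -/

import Mathlib

/-- A numerical semigroup: a subset of ℕ containing 0, closed under addition,
with finite complement in ℕ. -/
def IsNumericalSemigroup (H : Set ℕ) : Prop :=
  0 ∈ H ∧ (∀ a ∈ H, ∀ b ∈ H, a + b ∈ H) ∧ (Hᶜ : Set ℕ).Finite

lemma apery_card (H : Set ℕ) (hH : IsNumericalSemigroup H) (n : ℕ) (hn : n ∈ H)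
    (hpos : 0 < n) :
    (H \ {x | ∃ m ∈ H, x = n + m}).ncard = n := by
  obtain ⟨h0, hadd, hfin⟩ := hH
  have hmul : ∀ k, k * n ∈ H := by
    intro k; induction k with
    | zero => simpa using h0
    | succ k ih => rw [Nat.succ_mul]; exact hadd _ ih _ hn
  set S := H \ {x | ∃ m ∈ H, x = n + m} with hS
  have hinj : ∀ a ∈ S, ∀ b ∈ S, (a : ZMod n) = b → a = b := by
    have key : ∀ a ∈ S, ∀ b ∈ S, a ≤ b → (a : ZMod n) = b → a = b := by
      intro a ha b hb hab h
      have hmod : a ≡ b [MOD n] := (ZMod.natCast_eq_natCast_iff a b n).mp h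
      obtain ⟨k, hk⟩ := (Nat.modEq_iff_dvd' hab).mp hmod
      rcases Nat.eq_zero_or_pos k with rfl | hkpos
      · omega
      · exfalso
        obtain ⟨k', rfl⟩ : ∃ k', k = k' + 1 := ⟨k - 1, by omega⟩
        rw [Nat.mul_succ, Nat.mul_comm n k'] at hk
        exact hb.2 ⟨a + k' * n, hadd _ ha.1 _ (hmul _), by omega⟩
    intro a ha b hb h
    rcases le_total a b with hle | hle
    · exact key a ha b hb hle h
    · exact (key b hb a ha hle h.symm).symm
  have hsurj : ∀ r : ZMod n, ∃ x ∈ S, (x : ZMod n) = r := by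
    intro r
    haveI : NeZero n := ⟨hpos.ne'⟩
    obtain ⟨c, hc⟩ := hfin.bddAbove
    have hbig : ∀ x : ℕ, c < x → x ∈ H := by
      intro x hx
      by_contra hxH
      exact absurd (hc hxH) (by omega)
    have hne : ∃ x, x ∈ H ∧ (x : ZMod n) = r := by
      refine ⟨r.val + (c + 1) * n, hbig _ ?_, by simp⟩
      nlinarith [r.val.zero_le]
    classical
    obtain ⟨hmH, hmr⟩ := Nat.find_spec hne
    refine ⟨Nat.find hne, ⟨hmH, ?_⟩, hmr⟩
    rintro ⟨h, hhH, heq⟩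
    have hhr : (h : ZMod n) = r := by
      have hn0 : ((n : ℕ) : ZMod n) = 0 := ZMod.natCast_self n
      rw [heq] at hmr
      push_cast at hmr
      rw [hn0, zero_add] at hmr
      exact hmr
    exact Nat.find_min hne (by omega) ⟨hhH, hhr⟩
  haveI : NeZero n := ⟨hpos.ne'⟩
  have hbij : Function.Bijective (fun x : S => ((x : ℕ) : ZMod n)) := by
    constructor
    · rintro ⟨a, ha⟩ ⟨b, hb⟩ h
      exact Subtype.ext (hinj a ha b hb h)
    · intro r
      obtain ⟨x, hx, hxr⟩ := hsurj r
      exact ⟨⟨x, hx⟩, hxr⟩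
  have : Nat.card S = Nat.card (ZMod n) := Nat.card_congr (Equiv.ofBijective _ hbij)
  rw [← Nat.card_coe_set_eq, this, Nat.card_zmod]

/-- If λ₁ is the smallest nonzero element of H and e ∈ H is nonzero, then
#(H \ (eH* + H)) = eλ₁, where H* = H \ {0} and eH* + H = {eλ + μ : λ ∈ H*, μ ∈ H}. -/
theorem stmt_6 (H : Set ℕ) (hH : IsNumericalSemigroup H)
    (lam1 : ℕ) (hlam1 : IsLeast {h | h ∈ H ∧ h ≠ 0} lam1)
    (e : ℕ) (he : e ∈ H) (hne : e ≠ 0) :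
    (H \ {x | ∃ l ∈ H, l ≠ 0 ∧ ∃ m ∈ H, x = e * l + m}).ncard = e * lam1 := by
  obtain ⟨hl1H, hl1ne⟩ := hlam1.1
  have hadd := hH.2.1
  have h0 := hH.1
  have hmul : ∀ k, k * e ∈ H := by
    intro k; induction k with
    | zero => simpa using h0
    | succ k ih => rw [Nat.succ_mul]; exact hadd _ ih _ he
  have hset : {x | ∃ l ∈ H, l ≠ 0 ∧ ∃ m ∈ H, x = e * l + m} =
      {x | ∃ m ∈ H, x = e * lam1 + m} := by
    ext x
    constructor
    · rintro ⟨l, hlH, hlne, m, hmH, rfl⟩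
      have hle : lam1 ≤ l := hlam1.2 ⟨hlH, hlne⟩
      refine ⟨(l - lam1) * e + m, hadd _ (hmul _) _ hmH, ?_⟩
      have : (l - lam1) * e = e * l - e * lam1 := by
        rw [Nat.sub_mul]; ring_nf
      nlinarith [Nat.sub_add_cancel hle]
    · rintro ⟨m, hmH, rfl⟩
      exact ⟨lam1, hl1H, hl1ne, m, hmH, rfl⟩
  rw [hset]
  have hnH : e * lam1 ∈ H := by rw [mul_comm]; exact hmul lam1
  have hnpos : 0 < e * lam1 := Nat.pos_of_ne_zero (by
    simp [Nat.mul_eq_zero, hne, hl1ne])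
  exact apery_card H hH (e * lam1) hnH hnpos
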